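/- Let M ≥ 4 be a power of 2, let H_0,...,H_{M−1} be the M cosets of a Hamming code of length M−1 (a perfect 1-error-correcting binary linear code), indexed so that H_0 is the code itself, and let c' be an integer with 0 < c' < M. Then the 2-coloring of H(M−1,2) whose first color class is H_i ∪ H_{i+1} ∪ ... ∪ H_{i+c'−1} (indices mod M) is a perfect coloring with quotient matrix [[c'−1, M−c'], [c', M−c'−1]]. -/

import Mathlib

/-- The Hamming graph `H(n, α)`: vertices are words of length `n` over `α`,
adjacent iff they differ in exactly one coordinate. -/
def HammingGraph (n : ℕ) (α : Type*) [DecidableEq α] : SimpleGraph (Fin n → α) where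
  Adj x y := hammingDist x y = 1
  symm := ⟨fun x y h => by exact (hammingDist_comm y x).trans h⟩
  loopless := ⟨fun x h => by simp only [hammingDist_self] at h; exact absurd h (by omega)⟩

instance {n : ℕ} {α : Type*} [DecidableEq α] : DecidableRel (HammingGraph n α).Adj :=
  fun x y => inferInstanceAs (Decidable (hammingDist x y = 1))

/-- `f` is a perfect coloring of `G` with quotient matrix `S`: every vertex of
color `i` has exactly `S i j` neighbors of color `j`. -/
def IsPerfectColoring {V K : Type*} [Fintype V] [DecidableEq K] (G : SimpleGraph V)
    [DecidableRel G.Adj] (f : V → K) (S : K → K → ℕ) : Prop :=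
  ∀ x : V, ∀ j : K, (Finset.univ.filter (fun y => G.Adj x y ∧ f y = j)).card = S (f x) j

/-- A function on words depends essentially on its `k`-th argument. -/
def EssentialDep {α K : Type*} {n : ℕ} (f : (Fin n → α) → K) (k : Fin n) : Prop :=
  ∃ x y : Fin n → α, (∀ t, t ≠ k → x t = y t) ∧ f x ≠ f y



private lemma zmod2_add_one_ne' : ∀ a : ZMod 2, a + 1 ≠ a := by decide

private lemma zmod2_add_one_ne (a : ZMod 2) : a + 1 ≠ a := zmod2_add_one_ne' a

private lemma zmod2_ne_iff' : ∀ a b : ZMod 2, a ≠ b → b = a + 1 := by decide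

private lemma zmod2_ne_iff {a b : ZMod 2} (h : a ≠ b) : b = a + 1 := zmod2_ne_iff' a b h

lemma nbhd_card {n : ℕ} (x : Fin n → ZMod 2) :
    (Finset.univ.filter fun y => hammingDist x y = 1).card = n := by
  classical
  have key : ∀ k : Fin n,
      (Finset.univ.filter fun i => x i ≠ Function.update x k (x k + 1) i) = {k} := by
    intro k; ext t
    by_cases h : t = k
    · subst h
      simp only [Function.update_self, Finset.mem_filter, Finset.mem_univ, true_and,
        Finset.mem_singleton]
      exact iff_of_true (fun h => zmod2_add_one_ne (x t) h.symm) trivial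
    · simp [Function.update_of_ne h, h]
  have hb : (Finset.univ : Finset (Fin n)).card =
      (Finset.univ.filter fun y => hammingDist x y = 1).card := by
    refine Finset.card_bij (fun k _ => Function.update x k (x k + 1)) ?_ ?_ ?_
    · intro k _
      simp only [Finset.mem_filter, Finset.mem_univ, true_and]
      show (Finset.univ.filter fun i => x i ≠ Function.update x k (x k + 1) i).card = 1
      rw [key k]; simp
    · intro k1 _ k2 _ h
      by_contra hne
      have h1 := congrFun h k1
      rw [Function.update_self, Function.update_of_ne hne] at h1
      exact zmod2_add_one_ne (x k1) h1
    · intro y hy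
      simp only [Finset.mem_filter, Finset.mem_univ, true_and] at hy
      have hy' : (Finset.univ.filter fun i => x i ≠ y i).card = 1 := hy
      obtain ⟨k, hk⟩ := Finset.card_eq_one.mp hy'
      refine ⟨k, Finset.mem_univ k, ?_⟩
      funext t
      by_cases h : t = k
      · subst h
        have : x t ≠ y t := by
          have : t ∈ ({t} : Finset (Fin n)) := Finset.mem_singleton_self t
          rw [← hk] at this
          simpa using this
        show Function.update x t (x t + 1) t = y t
        rw [Function.update_self]
        exact (zmod2_ne_iff this).symm
      · have : ¬(x t ≠ y t) := by
          intro hne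
          have : t ∈ (Finset.univ.filter fun i => x i ≠ y i) := by simpa using hne
          rw [hk] at this
          exact h (Finset.mem_singleton.mp this)
        show Function.update x k (x k + 1) t = y t
        rw [Function.update_of_ne h]
        exact not_not.mp this
  simpa using hb.symm

lemma coset_count {n : ℕ} (Hcode : Submodule (ZMod 2) (Fin n → ZMod 2))
    (hperf : ∀ x : Fin n → ZMod 2, ∃! c, c ∈ Hcode ∧ hammingDist x c ≤ 1)
    (T : Finset (Fin n → ZMod 2)) (v : Fin n → ZMod 2)
    (hT : ∀ x, x ∈ T ↔ x - v ∈ Hcode) (x : Fin n → ZMod 2) :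
    (Finset.univ.filter fun y => hammingDist x y = 1 ∧ y ∈ T).card
      = if x ∈ T then 0 else 1 := by
  classical
  have dist_shift : ∀ y : Fin n → ZMod 2, hammingDist (x - v) (y - v) = hammingDist x y := by
    intro y
    rw [hammingDist_eq_hammingNorm, hammingDist_eq_hammingNorm]; congr 1; abel
  obtain ⟨c, ⟨hcH, hcd⟩, hcu⟩ := hperf (x - v)
  by_cases hx : x ∈ T
  · rw [if_pos hx, Finset.card_eq_zero, Finset.filter_eq_empty_iff]
    rintro y - ⟨hd, hyT⟩
    have h1 : x - v = c := hcu _ ⟨(hT x).mp hx, by simp⟩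
    have h2 : y - v = c := hcu _ ⟨(hT y).mp hyT, by rw [dist_shift, hd]⟩
    have hxy : x = y := by
      have := h1.trans h2.symm
      exact sub_left_injective this
    rw [← hxy, hammingDist_self] at hd
    exact absurd hd (by omega)
  · rw [if_neg hx, Finset.card_eq_one]
    have hc0 : x - v ≠ c := fun h => hx ((hT x).mpr (h ▸ hcH))
    have hne : hammingDist (x - v) c ≠ 0 := fun h => hc0 (hammingDist_eq_zero.mp h)
    have hcd1 : hammingDist (x - v) c = 1 := by omega
    refine ⟨c + v, ?_⟩
    rw [Finset.eq_singleton_iff_unique_mem]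
    constructor
    · simp only [Finset.mem_filter, Finset.mem_univ, true_and]
      refine ⟨?_, (hT _).mpr (by simp [hcH])⟩
      rw [← dist_shift (c + v), add_sub_cancel_right, hcd1]
    · intro y hy
      simp only [Finset.mem_filter, Finset.mem_univ, true_and] at hy
      obtain ⟨hd, hyT⟩ := hy
      have : y - v = c := hcu _ ⟨(hT y).mp hyT, by rw [dist_shift, hd]⟩
      rw [← this, sub_add_cancel]
/-- The union of `c'` cyclically consecutive cosets of the Hamming code of length
`M-1` gives a perfect 2-coloring of `H(M-1,2)` with quotient matrix
`[[c'-1, M-c'], [c', M-c'-1]]`. -/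
theorem stmt13 (s : ℕ) (hs : 2 ≤ s) (M : ℕ) (hM : M = 2 ^ s) (hM0 : 0 < M)
    (Hcode : Submodule (ZMod 2) (Fin (M - 1) → ZMod 2))
    (hperfcode : ∀ x : Fin (M - 1) → ZMod 2, ∃! c, c ∈ Hcode ∧ hammingDist x c ≤ 1)
    (H : Fin M → Finset (Fin (M - 1) → ZMod 2))
    (h0 : ∀ x, x ∈ H ⟨0, hM0⟩ ↔ x ∈ Hcode)
    (hcoset : ∀ j : Fin M, ∃ v, ∀ x, x ∈ H j ↔ x - v ∈ Hcode)
    (hpart : ∀ x, ∃! j : Fin M, x ∈ H j)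
    (c' : ℕ) (hc1 : 0 < c') (hc2 : c' < M) (i : ℕ) (hi : i < M) :
    IsPerfectColoring (HammingGraph (M - 1) (ZMod 2))
      (fun x => if x ∈ (Finset.range c').biUnion
            (fun t => H ⟨(i + t) % M, Nat.mod_lt _ hM0⟩)
          then (0 : Fin 2) else 1)
      ![![c' - 1, M - c'], ![c', M - c' - 1]] := by
  classical
  intro x j
  set jdx : ℕ → Fin M := fun t => ⟨(i + t) % M, Nat.mod_lt _ hM0⟩ with hjdx
  set S : Finset (Fin (M - 1) → ZMod 2) :=
    (Finset.range c').biUnion (fun t => H (jdx t)) with hS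
  have hjdx_inj : ∀ t1, t1 < c' → ∀ t2, t2 < c' → jdx t1 = jdx t2 → t1 = t2 := by
    intro t1 h1 t2 h2 h
    have hmod : (i + t1) % M = (i + t2) % M := by
      simpa [hjdx, Fin.mk.injEq] using h
    have hmm : t1 ≡ t2 [MOD M] := Nat.ModEq.add_left_cancel' i hmod
    rwa [Nat.ModEq, Nat.mod_eq_of_lt (h1.trans hc2), Nat.mod_eq_of_lt (h2.trans hc2)] at hmm
  have hdisj : ∀ y (j1 j2 : Fin M), y ∈ H j1 → y ∈ H j2 → j1 = j2 := by
    intro y j1 j2 hy1 hy2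
    obtain ⟨j0, _, hu⟩ := hpart y
    rw [hu j1 hy1, hu j2 hy2]
  have hcount : ∀ j' : Fin M,
      (Finset.univ.filter fun y => hammingDist x y = 1 ∧ y ∈ H j').card
        = if x ∈ H j' then 0 else 1 := by
    intro j'
    obtain ⟨v, hv⟩ := hcoset j'
    exact coset_count Hcode hperfcode (H j') v hv x
  have hsplit : Finset.univ.filter (fun y => hammingDist x y = 1 ∧ y ∈ S)
      = (Finset.range c').biUnion
          (fun t => Finset.univ.filter fun y => hammingDist x y = 1 ∧ y ∈ H (jdx t)) := by
    ext y
    simp only [Finset.mem_filter, Finset.mem_univ, true_and, Finset.mem_biUnion,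
      hS, Finset.mem_range]
    tauto
  have hcard0 : (Finset.univ.filter fun y => hammingDist x y = 1 ∧ y ∈ S).card
      = if x ∈ S then c' - 1 else c' := by
    rw [hsplit, Finset.card_biUnion (by
      intro t1 ht1 t2 ht2 hne
      rw [Function.onFun, Finset.disjoint_left]
      intro y hy1 hy2
      simp only [Finset.mem_filter, Finset.mem_univ, true_and] at hy1 hy2
      exact hne (hjdx_inj t1 (Finset.mem_range.mp ht1) t2 (Finset.mem_range.mp ht2)
        (hdisj y _ _ hy1.2 hy2.2)))]
    rw [Finset.sum_congr rfl (fun t _ => hcount (jdx t))]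
    have hsum : (∑ t ∈ Finset.range c', if x ∈ H (jdx t) then (0:ℕ) else 1)
        = ((Finset.range c').filter (fun t => ¬ x ∈ H (jdx t))).card := by
      rw [Finset.card_filter]
      exact Finset.sum_congr rfl (fun t _ => by by_cases h : x ∈ H (jdx t) <;> simp [h])
    rw [hsum]
    have hcompl := Finset.card_filter_add_card_filter_not
      (s := Finset.range c') (p := fun t => x ∈ H (jdx t))
    rw [Finset.card_range] at hcompl
    by_cases hx : x ∈ S
    · rw [if_pos hx]
      obtain ⟨t0, ht0, hxt0⟩ := Finset.mem_biUnion.mp hx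
      have hft : (Finset.range c').filter (fun t => x ∈ H (jdx t)) = {t0} := by
        ext t
        simp only [Finset.mem_filter, Finset.mem_range, Finset.mem_singleton]
        constructor
        · rintro ⟨htc, hxt⟩
          exact hjdx_inj t htc t0 (Finset.mem_range.mp ht0) (hdisj x _ _ hxt hxt0)
        · rintro rfl
          exact ⟨Finset.mem_range.mp ht0, hxt0⟩
      rw [hft] at hcompl
      simp only [Finset.card_singleton] at hcompl
      omega
    · rw [if_neg hx]
      have hft : (Finset.range c').filter (fun t => x ∈ H (jdx t)) = ∅ := by
        rw [Finset.filter_eq_empty_iff]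
        intro t ht hxt
        exact hx (Finset.mem_biUnion.mpr ⟨t, ht, hxt⟩)
      rw [hft] at hcompl
      simp only [Finset.card_empty] at hcompl
      omega
  have hA : (Finset.univ.filter fun y => hammingDist x y = 1).card = M - 1 := nbhd_card x
  have hAdj : ∀ y, (HammingGraph (M - 1) (ZMod 2)).Adj x y ↔ hammingDist x y = 1 :=
    fun y => Iff.rfl
  have key1 : (Finset.univ.filter fun y => hammingDist x y = 1 ∧ y ∈ S).card
      + (Finset.univ.filter fun y => hammingDist x y = 1 ∧ ¬ y ∈ S).card = M - 1 := by
    rw [← Finset.filter_filter, ← Finset.filter_filter,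
      Finset.card_filter_add_card_filter_not, hA]
  have hcol0 : ∀ y, ((if y ∈ S then (0 : Fin 2) else 1) = 0) ↔ y ∈ S := by
    intro y; by_cases h : y ∈ S <;> simp [h]
  have hcol1 : ∀ y, ((if y ∈ S then (0 : Fin 2) else 1) = 1) ↔ ¬ y ∈ S := by
    intro y; by_cases h : y ∈ S <;> simp [h]
  by_cases hx : x ∈ S
  · rw [if_pos hx] at hcard0
    rw [hcard0] at key1
    beta_reduce
    rw [if_pos hx]
    fin_cases j
    · simp only [Fin.mk_zero, Fin.isValue, Matrix.cons_val_zero, hAdj, hcol0]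
      exact hcard0
    · simp only [Fin.mk_one, Fin.isValue, Matrix.cons_val_one, Matrix.head_cons,
        Matrix.cons_val_zero, hAdj, hcol1]
      omega
  · rw [if_neg hx] at hcard0
    rw [hcard0] at key1
    beta_reduce
    rw [if_neg hx]
    fin_cases j
    · simp only [Fin.mk_zero, Fin.isValue, Matrix.cons_val_zero, Matrix.cons_val_one,
        Matrix.head_cons, hAdj, hcol0]
      exact hcard0
    · simp only [Fin.mk_one, Fin.isValue, Matrix.cons_val_one, Matrix.head_cons,
        Matrix.cons_val_zero, hAdj, hcol1]
      omega
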